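/- A commutative unital quantale Q is Noetherian (every ascending chain of ideals stabilizes, equivalently every ideal is finitely generated) if and only if every class Σ of ideals of Q, with the quantale topology, is quasi-compact. -/

import Mathlib

namespace QuantalePaper

/-- An ideal of a complete lattice: nonempty, downward closed, closed under binary joins. -/
structure QIdeal (Q : Type*) [CompleteLattice Q] where
  carrier : Set Q
  nonempty' : carrier.Nonempty
  sup_mem' : ∀ ⦃x⦄, x ∈ carrier → ∀ ⦃y⦄, y ∈ carrier → x ⊔ y ∈ carrier
  lower' : ∀ ⦃x⦄, x ∈ carrier → ∀ ⦃l : Q⦄, l ≤ x → l ∈ carrier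

namespace QIdeal

variable {Q : Type*} [CompleteLattice Q]

instance : SetLike (QIdeal Q) Q where
  coe := carrier
  coe_injective := by rintro ⟨a,_,_,_⟩ ⟨b,_,_,_⟩ h; simpa using h

instance : PartialOrder (QIdeal Q) := .ofSetLike (QIdeal Q) Q

/-- A proper ideal. -/
def IsProper (I : QIdeal Q) : Prop := (⊤ : Q) ∉ I

/-- A maximal ideal: a proper ideal maximal among proper ideals. -/
def IsMaximal (I : QIdeal Q) : Prop :=
  I.IsProper ∧ ∀ J : QIdeal Q, J.IsProper → I ≤ J → J = I

/-- A prime ideal. -/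
def IsPrime [Mul Q] (I : QIdeal Q) : Prop :=
  I.IsProper ∧ ∀ x y : Q, x * y ∈ I → x ∈ I ∨ y ∈ I

end QIdeal

variable {Q : Type*} [CompleteLattice Q]

/-- The subbasic closed set `I↑ ∩ Σ` inside the subtype of a class `S` of ideals. -/
def up (S : Set (QIdeal Q)) (I : QIdeal Q) : Set ↥S := {J : ↥S | (I : Set Q) ⊆ (J : QIdeal Q)}

/-- The quantale topology on a class `S` of ideals, generated by the sets `up S I`
as a subbasis of closed sets. -/
def qTop (S : Set (QIdeal Q)) : TopologicalSpace ↥S :=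
  .generateFrom {U | ∃ I : QIdeal Q, U = (up S I)ᶜ}

/-- `X↑` for a set `X` of ideals: members of `S` containing the intersection `⋀X`,
with `∅↑ = ∅`. -/
def upSet (S : Set (QIdeal Q)) (X : Set (QIdeal Q)) : Set ↥S :=
  {J : ↥S | X.Nonempty ∧ ∀ x : Q, (∀ I ∈ X, x ∈ I) → x ∈ (J : QIdeal Q)}

open Classical in
/-- a chosen element of an ideal -/
noncomputable def pick (I : QIdeal Q) : Q := I.nonempty'.choose

theorem pick_mem (I : QIdeal Q) : pick I ∈ I := I.nonempty'.choose_spec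

theorem bot_mem (I : QIdeal Q) : (⊥ : Q) ∈ I := I.lower' (pick_mem I) bot_le

open Classical in
/-- the join of a finite set of ideals -/
noncomputable def finJoin (s : Finset (QIdeal Q)) : QIdeal Q where
  carrier := {x | ∃ g : QIdeal Q → Q, (∀ I ∈ s, g I ∈ I) ∧ x ≤ s.sup g}
  nonempty' := ⟨s.sup pick, pick, fun I _ => pick_mem I, le_rfl⟩
  sup_mem' := by
    rintro x ⟨g1, hg1, hx⟩ y ⟨g2, hg2, hy⟩
    refine ⟨fun I => g1 I ⊔ g2 I, fun I hI => I.sup_mem' (hg1 I hI) (hg2 I hI), ?_⟩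
    exact sup_le (hx.trans (Finset.sup_mono_fun fun I _ => le_sup_left))
      (hy.trans (Finset.sup_mono_fun fun I _ => le_sup_right))
  lower' := by rintro x ⟨g, hg, hx⟩ l hl; exact ⟨g, hg, hl.trans hx⟩

open Classical in
theorem le_finJoin {s : Finset (QIdeal Q)} {I : QIdeal Q} (hI : I ∈ s) : I ≤ finJoin s := by
  intro x hx
  refine ⟨fun J => if J = I then x else pick J, fun J _ => ?_, ?_⟩
  · by_cases h : J = I
    · subst h; simp [hx]
    · simp [h, pick_mem]
  · have := Finset.le_sup (f := fun J => if J = I then x else pick J) hI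
    simpa using this

theorem finJoin_le {s : Finset (QIdeal Q)} {J : QIdeal Q} (h : ∀ I ∈ s, I ≤ J) :
    finJoin s ≤ J := by
  rintro x ⟨g, hg, hx⟩
  refine J.lower' ?_ hx
  exact Finset.sup_induction (bot_mem J) (fun a ha b hb => J.sup_mem' ha hb)
    (fun I hI => h I hI (hg I hI))

theorem finJoin_mono {s t : Finset (QIdeal Q)} (h : s ⊆ t) : finJoin s ≤ finJoin t :=
  finJoin_le fun I hI => le_finJoin (h hI)

/-- From the ascending chain condition: every family of ideals has a finite subfamily whose
join bounds the whole family. -/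
theorem exists_finset_bound
    (hacc : ∀ f : ℕ → QIdeal Q, Monotone f → ∃ n : ℕ, ∀ m : ℕ, n ≤ m → f m = f n)
    (A : Set (QIdeal Q)) :
    ∃ s : Finset (QIdeal Q), ↑s ⊆ A ∧ ∀ I ∈ A, I ≤ finJoin s := by
  by_contra hcon
  push_neg at hcon
  have step : ∀ s : {s : Finset (QIdeal Q) // ↑s ⊆ A},
      ∃ I, I ∈ A ∧ ¬ I ≤ finJoin s.1 := by
    intro s
    obtain ⟨I, hIA, hI⟩ := hcon s.1 s.2
    exact ⟨I, hIA, hI⟩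
  choose nxt hnxtA hnxt using step
  classical
  let t : ℕ → {s : Finset (QIdeal Q) // ↑s ⊆ A} := fun n =>
    Nat.rec ⟨∅, by simp⟩ (fun _ s => ⟨insert (nxt s) s.1, by
      simp only [Finset.coe_insert, Set.insert_subset_iff]
      exact ⟨hnxtA s, s.2⟩⟩) n
  have ht : ∀ n, (t (n+1)).1 = insert (nxt (t n)) (t n).1 := fun n => rfl
  have hmono : Monotone fun n => finJoin (t n).1 := by
    apply monotone_nat_of_le_succ
    intro n
    exact finJoin_mono (by rw [ht n]; exact Finset.subset_insert _ _)
  obtain ⟨n, hn⟩ := hacc _ hmono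
  have h1 : nxt (t n) ≤ finJoin (t (n+1)).1 :=
    le_finJoin (by rw [ht n]; exact Finset.mem_insert_self _ _)
  rw [hn (n+1) (Nat.le_succ n)] at h1
  exact hnxt (t n) h1

theorem isClosed_up (S : Set (QIdeal Q)) (I : QIdeal Q) : @IsClosed _ (qTop S) (up S I) := by
  letI := qTop S
  rw [← isOpen_compl_iff]
  exact TopologicalSpace.GenerateOpen.basic _ ⟨I, rfl⟩

theorem stmt7 [CommMonoid Q] [IsQuantale Q] (htop : (1 : Q) = ⊤) :
    (∀ f : ℕ → QIdeal Q, Monotone f → ∃ n : ℕ, ∀ m : ℕ, n ≤ m → f m = f n) ↔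
      ∀ S : Set (QIdeal Q), @CompactSpace ↥S (qTop S) := by
  constructor
  · -- Noetherian → every class is quasi-compact
    intro hacc S
    letI := qTop S
    refine ⟨isCompact_iff_ultrafilter_le_nhds.2 ?_⟩
    intro F _
    -- the family of ideals whose up-sets belong to the ultrafilter
    set A : Set (QIdeal Q) := {I | up S I ∈ F} with hA
    obtain ⟨s, hsA, hbound⟩ := exists_finset_bound hacc A
    -- the finite intersection of the corresponding up-sets is in F, hence nonempty
    have hinter : (⋂ I ∈ s, up S I) ∈ F := by
      refine (Filter.biInter_mem s.finite_toSet).2 ?_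
      intro I hI
      exact hsA hI
    obtain ⟨x, hx⟩ := Ultrafilter.nonempty_of_mem hinter
    simp only [Set.mem_iInter] at hx
    -- x contains every ideal of A
    have hxA : ∀ I ∈ A, (I : Set Q) ⊆ ((x : QIdeal Q) : Set Q) := by
      intro I hI
      refine le_trans (hbound I hI) (finJoin_le ?_)
      intro J hJ
      exact hx J hJ
    refine ⟨x, Set.mem_univ x, ?_⟩
    -- convergence: every subbasic open containing x is in F
    rw [qTop, TopologicalSpace.nhds_generateFrom]
    refine le_iInf fun U => le_iInf fun hU => ?_
    obtain ⟨hxU, I, rfl⟩ := hU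
    rw [Filter.le_principal_iff]
    rw [Ultrafilter.mem_coe, Ultrafilter.compl_mem_iff_notMem]
    intro hF
    exact hxU (hxA I hF)
  · -- quasi-compactness → Noetherian
    intro hcpt f hf
    set S : Set (QIdeal Q) := Set.range f with hS
    by_cases hex : ∃ k, ∀ n, f n ≤ f k
    · obtain ⟨k, hk⟩ := hex
      exact ⟨k, fun m hm => le_antisymm (hk m) (hf hm)⟩
    · exfalso
      push_neg at hex
      letI := qTop S
      haveI := hcpt S
      have hempty : (Set.univ : Set ↥S) ∩ ⋂ n, up S (f n) = ∅ := by
        ext J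
        simp only [Set.univ_inter, Set.mem_iInter, Set.mem_empty_iff_false, iff_false]
        intro hJ
        obtain ⟨k, hk⟩ := J.2
        obtain ⟨n, hn⟩ := hex k
        apply hn
        intro y hy
        have := hJ n hy
        rw [hk]
        exact this
      obtain ⟨t, ht⟩ := isCompact_univ.elim_finite_subfamily_closed _
        (fun n => isClosed_up S (f n)) hempty
      set N : ℕ := t.sup id with hN
      have hmem : (⟨f N, N, rfl⟩ : ↥S) ∈ (Set.univ : Set ↥S) ∩ ⋂ n ∈ t, up S (f n) := by
        refine ⟨Set.mem_univ _, ?_⟩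
        simp only [Set.mem_iInter]
        intro n hn
        intro y hy
        exact hf (Finset.le_sup (f := id) hn) hy
      rw [ht] at hmem
      exact hmem

end QuantalePaper
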